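/- Let A be a subset of a vector space W over a field F with |A| = k sufficiently large, and let m = |A +̂ A|. Then there exist a* ∈ A and subsets A_0, A_1 ⊆ A such that |A_0| ≤ 4 k^{-1/15} m, |A \ A_1| ≤ 4 k^{-4/5} m, and a* + A_1 ⊆ A_0 +̂ A_0. -/

import Mathlib

/-- The restricted sumset `X +̂ X = {x + y : x, y ∈ X, x ≠ y}`. -/
def hatAdd {G : Type*} [AddCommGroup G] [DecidableEq G] (X : Finset G) : Finset G :=
  ((X ×ˢ X).filter fun p => p.1 ≠ p.2).image fun p => p.1 + p.2

universe u v

open Finset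

set_option linter.unusedSectionVars false
set_option maxRecDepth 8000
set_option maxHeartbeats 1000000
namespace SG

variable {G : Type*} [AddCommGroup G] [DecidableEq G]

lemma mem_hatAdd' {X : Finset G} {a b : G} (ha : a ∈ X) (hb : b ∈ X) (hab : a ≠ b) :
    a + b ∈ hatAdd X := by
  refine mem_image.mpr ⟨(a, b), ?_, rfl⟩
  simp [mem_filter, mem_product, ha, hb, hab]

noncomputable def w (p : ℝ) (A S : Finset G) : ℝ := p ^ S.card * (1 - p) ^ (A.card - S.card)

noncomputable def Exp (p : ℝ) (A : Finset G) (f : Finset G → ℝ) : ℝ :=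
  ∑ S ∈ A.powerset, w p A S * f S

lemma sum_w (p : ℝ) (A : Finset G) : ∑ S ∈ A.powerset, w p A S = 1 := by
  have h := Finset.prod_add (fun _ : G => p) (fun _ : G => 1 - p) A
  simp only [prod_const] at h
  have h2 : ∀ S ∈ A.powerset, p ^ S.card * (1-p) ^ (A \ S).card = w p A S := by
    intro S hS
    rw [mem_powerset] at hS
    rw [card_sdiff_of_subset hS]; rfl
  rw [Finset.sum_congr rfl h2] at h
  simpa using h.symm

lemma Exp_const (p : ℝ) (A : Finset G) (c : ℝ) : Exp p A (fun _ => c) = c := by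
  unfold Exp
  rw [← Finset.sum_mul, sum_w, one_mul]

lemma Exp_congr (p : ℝ) (A : Finset G) {f g : Finset G → ℝ}
    (h : ∀ S ⊆ A, f S = g S) : Exp p A f = Exp p A g := by
  unfold Exp
  exact Finset.sum_congr rfl fun S hS => by rw [h S (mem_powerset.mp hS)]

lemma Exp_add (p : ℝ) (A : Finset G) (f g : Finset G → ℝ) :
    Exp p A (fun S => f S + g S) = Exp p A f + Exp p A g := by
  unfold Exp; rw [← Finset.sum_add_distrib]; exact Finset.sum_congr rfl fun S _ => by ring

lemma Exp_mul (p : ℝ) (A : Finset G) (c : ℝ) (f : Finset G → ℝ) :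
    Exp p A (fun S => c * f S) = c * Exp p A f := by
  unfold Exp; rw [Finset.mul_sum]; exact Finset.sum_congr rfl fun S _ => by ring

lemma Exp_sum (p : ℝ) (A : Finset G) {ι : Type*} (I : Finset ι) (f : ι → Finset G → ℝ) :
    Exp p A (fun S => ∑ x ∈ I, f x S) = ∑ x ∈ I, Exp p A (f x) := by
  unfold Exp
  simp only [Finset.mul_sum]
  rw [Finset.sum_comm]

lemma w_nonneg {p : ℝ} (hp0 : 0 ≤ p) (hp1 : p ≤ 1) (A S : Finset G) : 0 ≤ w p A S := by
  have h1 : 0 ≤ 1 - p := by linarith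
  exact mul_nonneg (pow_nonneg hp0 _) (pow_nonneg h1 _)

lemma Exp_split (p : ℝ) {A B : Finset G} (hBA : B ⊆ A) {f g h : Finset G → ℝ}
    (hf : ∀ S ⊆ A, f S = g (S ∩ B) * h (S \ B)) :
    Exp p A f = Exp p B g * Exp p (A \ B) h := by
  unfold Exp
  rw [Finset.sum_mul_sum, ← Finset.sum_product']
  refine Finset.sum_nbij' (fun S => (S ∩ B, S \ B)) (fun UV => UV.1 ∪ UV.2) ?_ ?_ ?_ ?_ ?_
  · intro S hS
    rw [mem_powerset] at hS
    refine mem_product.mpr ⟨mem_powerset.mpr inter_subset_right, mem_powerset.mpr ?_⟩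
    exact sdiff_subset_sdiff hS (Finset.Subset.refl B)
  · intro UV hUV
    rw [mem_product, mem_powerset, mem_powerset] at hUV
    refine mem_powerset.mpr (union_subset (hUV.1.trans hBA) (hUV.2.trans sdiff_subset))
  · intro S hS
    simp only []
    ext x
    simp only [mem_union, mem_inter, mem_sdiff]
    tauto
  · intro UV hUV
    rw [mem_product, mem_powerset, mem_powerset] at hUV
    obtain ⟨hU, hV⟩ := hUV
    have hVB : Disjoint UV.2 B := disjoint_of_subset_left hV sdiff_disjoint
    have hUB : UV.1 ∩ B = UV.1 := inter_eq_left.mpr hU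
    have h1 : (UV.1 ∪ UV.2) ∩ B = UV.1 := by
      rw [union_inter_distrib_right, hUB, (disjoint_iff_inter_eq_empty.mp hVB), union_empty]
    have h2 : (UV.1 ∪ UV.2) \ B = UV.2 := by
      rw [union_sdiff_distrib, sdiff_eq_empty_iff_subset.mpr hU, empty_union,
        sdiff_eq_self_of_disjoint hVB]
    exact Prod.ext h1 h2
  · intro S hS
    rw [mem_powerset] at hS
    rw [hf S hS]
    have hcard : (S ∩ B).card + (S \ B).card = S.card := card_inter_add_card_sdiff S B
    have h1 : (S ∩ B).card ≤ B.card := card_le_card inter_subset_right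
    have h2 : (S \ B).card ≤ (A \ B).card := card_le_card (sdiff_subset_sdiff hS (Finset.Subset.refl B))
    have h3 : B.card + (A \ B).card = A.card := by
      rw [add_comm, card_sdiff_add_card_eq_card hBA]
    have h4 : S.card ≤ A.card := card_le_card hS
    unfold w
    have e1 : A.card - S.card = (B.card - (S ∩ B).card) + ((A \ B).card - (S \ B).card) := by omega
    rw [e1, ← hcard, pow_add, pow_add]
    ring


lemma Exp_subset_ind (p : ℝ) (B : Finset G) :
    Exp p B (fun U => if B ⊆ U then (1:ℝ) else 0) = p ^ B.card := by
  unfold Exp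
  rw [Finset.sum_eq_single B]
  · simp [w]
  · intro U hU hUB
    rw [mem_powerset] at hU
    have : ¬ B ⊆ U := fun h => hUB (Finset.Subset.antisymm hU h)
    simp [this]
  · intro h
    exact absurd (mem_powerset.mpr (Finset.Subset.refl B)) h

lemma Exp_mem_ind (p : ℝ) {A : Finset G} {a : G} (ha : a ∈ A) :
    Exp p A (fun S => if a ∈ S then (1:ℝ) else 0) = p := by
  have hBA : {a} ⊆ A := singleton_subset_iff.mpr ha
  have := Exp_split p hBA (f := fun S => if a ∈ S then (1:ℝ) else 0)
    (g := fun U => if ({a} : Finset G) ⊆ U then (1:ℝ) else 0) (h := fun _ => 1) ?_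
  · rw [this, Exp_subset_ind, Exp_const, card_singleton, pow_one, mul_one]
  · intro S hS
    rw [mul_one]
    congr 1
    simp [Finset.subset_inter_iff, singleton_subset_iff]

lemma Exp_card (p : ℝ) (A : Finset G) :
    Exp p A (fun S => (S.card : ℝ)) = p * A.card := by
  have h1 : Exp p A (fun S => (S.card : ℝ))
      = Exp p A (fun S => ∑ a ∈ A, if a ∈ S then (1:ℝ) else 0) := by
    refine Exp_congr p A fun S hS => ?_
    rw [Finset.sum_ite_mem, inter_eq_right.mpr hS, Finset.sum_const, nsmul_eq_mul, mul_one]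
  rw [h1, Exp_sum]
  rw [Finset.sum_congr rfl (fun a ha => Exp_mem_ind p ha), Finset.sum_const, nsmul_eq_mul]
  ring

lemma Exp_blocks (p : ℝ) (Bs : Finset (Finset G)) : ∀ (A : Finset G),
    (∀ blk ∈ Bs, blk ⊆ A) → (∀ blk ∈ Bs, blk.card = 2) →
    (∀ b1 ∈ Bs, ∀ b2 ∈ Bs, b1 ≠ b2 → Disjoint b1 b2) →
    Exp p A (fun S => ∏ blk ∈ Bs, (1 - if blk ⊆ S then (1:ℝ) else 0)) = (1 - p^2) ^ Bs.card := by
  induction Bs using Finset.induction_on with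
  | empty => intro A _ _ _; simp only [prod_empty, card_empty, pow_zero]; exact Exp_const p A 1
  | @insert b Bs' hb ih =>
    intro A hsub hcard hdisj
    have hbA : b ⊆ A := hsub b (mem_insert_self b Bs')
    have key : ∀ S ⊆ A,
        (∏ blk ∈ insert b Bs', (1 - if blk ⊆ S then (1:ℝ) else 0))
        = (1 - if b ⊆ S ∩ b then (1:ℝ) else 0)
          * ∏ blk ∈ Bs', (1 - if blk ⊆ S \ b then (1:ℝ) else 0) := by
      intro S hS
      rw [prod_insert hb]
      congr 1
      · congr 1
        congr 1
        simp only [eq_iff_iff, Finset.subset_inter_iff]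
        exact ⟨fun h => ⟨h, Finset.Subset.refl b⟩, fun h => h.1⟩
      · refine Finset.prod_congr rfl fun blk hblk => ?_
        have hne : blk ≠ b := fun h => hb (h ▸ hblk)
        have hd : Disjoint blk b :=
          hdisj blk (mem_insert_of_mem hblk) b (mem_insert_self b Bs') hne
        congr 1
        congr 1
        simp only [eq_iff_iff]
        constructor
        · intro h y hy
          exact mem_sdiff.mpr ⟨h hy, fun hyb => (Finset.disjoint_left.mp hd hy) hyb⟩
        · intro h
          exact h.trans sdiff_subset
    rw [Exp_split p hbA (g := fun U => 1 - if b ⊆ U then (1:ℝ) else 0)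
      (h := fun S' => ∏ blk ∈ Bs', (1 - if blk ⊆ S' then (1:ℝ) else 0)) key]
    have e1 : Exp p b (fun U => 1 - if b ⊆ U then (1:ℝ) else 0) = 1 - p ^ 2 := by
      have := Exp_add p b (fun _ => (1:ℝ)) (fun U => -(if b ⊆ U then (1:ℝ) else 0))
      have e2 : Exp p b (fun U => -(if b ⊆ U then (1:ℝ) else 0))
          = - Exp p b (fun U => if b ⊆ U then (1:ℝ) else 0) := by
        have := Exp_mul p b (-1) (fun U => if b ⊆ U then (1:ℝ) else 0)
        simp only [neg_one_mul] at this
        exact this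
      calc Exp p b (fun U => 1 - if b ⊆ U then (1:ℝ) else 0)
          = Exp p b (fun U => 1 + -(if b ⊆ U then (1:ℝ) else 0)) := by
            refine Exp_congr p b fun U _ => by ring
        _ = Exp p b (fun _ => (1:ℝ)) + Exp p b (fun U => -(if b ⊆ U then (1:ℝ) else 0)) :=
            Exp_add p b _ _
        _ = 1 - p ^ 2 := by
            rw [e2, Exp_const, Exp_subset_ind, hcard b (mem_insert_self b Bs')]; ring
    rw [e1, ih (A \ b) ?_ (fun blk h => hcard blk (mem_insert_of_mem h))
        (fun b1 h1 b2 h2 hne => hdisj b1 (mem_insert_of_mem h1) b2 (mem_insert_of_mem h2) hne),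
      card_insert_of_notMem hb, pow_succ]
    · ring
    · intro blk hblk
      have hne : blk ≠ b := fun h => hb (h ▸ hblk)
      have hd : Disjoint blk b :=
        hdisj blk (mem_insert_of_mem hblk) b (mem_insert_self b Bs') hne
      intro y hy
      exact mem_sdiff.mpr ⟨hsub blk (mem_insert_of_mem hblk) hy, fun hyb => (Finset.disjoint_left.mp hd hy) hyb⟩


lemma key_decay {u : ℝ} (hu : (372:ℝ)^31 ≤ u) :
    (1 - (u⁻¹)^2) ^ (⌈u^3⌉₊ / 2) ≤ (u^30)⁻¹ := by
  have hu2 : (2:ℝ) ≤ u := le_trans (by norm_num) hu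
  have hu0 : (0:ℝ) < u := by linarith
  have hu24 : (24:ℝ) ≤ u := le_trans (by norm_num) hu
  set t : ℝ := (u^2)⁻¹ with ht_def
  have hips : (u⁻¹)^2 = t := by rw [ht_def, inv_pow]
  rw [hips]
  have hu2sq : (4:ℝ) ≤ u^2 := by nlinarith
  have ht0 : 0 < t := by positivity
  have ht1 : t ≤ 1/4 := by
    rw [ht_def]
    rw [inv_le_comm₀ (by positivity) (by norm_num)]
    linarith
  have h1t0 : 0 ≤ 1 - t := by linarith
  have h1t1 : 1 - t ≤ 1 := by linarith
  set T := ⌈u^3⌉₊ with hT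
  set D := T / 2 with hD_def
  set M := ⌈2*u^2⌉₊ with hM_def
  set q := D / M with hq_def
  set s := q / 31 with hs_def
  have hMreal : 2*u^2 ≤ (M:ℝ) := Nat.le_ceil _
  have hMle : (M:ℝ) ≤ 3*u^2 := by
    have := Nat.ceil_lt_add_one (show (0:ℝ) ≤ 2*u^2 by positivity)
    have h1 : (1:ℝ) ≤ u^2 := by linarith
    linarith
  have hM0 : 0 < M := by
    have : (0:ℝ) < (M:ℝ) := by nlinarith
    exact_mod_cast this
  have hTreal : u^3 ≤ (T:ℝ) := Nat.le_ceil _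
  have hDreal : (u^3 - 1)/2 ≤ (D:ℝ) := by
    have h1 : T ≤ 2 * D + 1 := by omega
    have h2 : (T:ℝ) ≤ 2*(D:ℝ) + 1 := by exact_mod_cast h1
    linarith
  have hqreal : u/6 - 2 ≤ (q:ℝ) := by
    have hmod : M * q + D % M = D := by rw [hq_def]; exact Nat.div_add_mod D M
    have hlt : D % M < M := Nat.mod_lt D hM0
    have h1 : D < M * (q + 1) := by rw [Nat.mul_succ]; omega
    have h2 : (D:ℝ) ≤ (M:ℝ) * ((q:ℝ) + 1) := by
      have : (D:ℝ) < (M:ℝ) * ((q:ℝ)+1) := by exact_mod_cast h1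
      linarith
    have h3 : (u^3-1)/2 ≤ 3*u^2 * ((q:ℝ)+1) := by nlinarith
    nlinarith [sq_nonneg u, mul_pos hu0 hu0]
  have hsreal : u/372 ≤ (s:ℝ) + 1 := by
    have h1 : q < 31 * (s + 1) := by
      have := Nat.div_add_mod q 31
      omega
    have h2 : (q:ℝ) ≤ 31 * ((s:ℝ)+1) := by
      have : (q:ℝ) < 31*((s:ℝ)+1) := by exact_mod_cast h1
      linarith
    linarith
  -- 2^q ≥ u^30
  have h2q : u^30 ≤ (2:ℝ)^q := by
    have hqs : 31 * s ≤ q := by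
      have := Nat.div_add_mod q 31
      omega
    have e1 : (2:ℝ)^(31*s) ≤ (2:ℝ)^q := pow_le_pow_right₀ one_le_two hqs
    have e2 : ((s:ℝ)+1)^31 ≤ (2:ℝ)^(31*s) := by
      have hn : s < 2^s := Nat.lt_two_pow_self
      have hn2 : ((s:ℝ)+1) ≤ (2:ℝ)^s := by
        have : (s+1 : ℕ) ≤ 2^s := hn
        exact_mod_cast this
      calc ((s:ℝ)+1)^31 ≤ ((2:ℝ)^s)^31 := pow_le_pow_left₀ (by positivity) hn2 31
        _ = (2:ℝ)^(31*s) := by rw [← pow_mul, mul_comm]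
    have e3 : (u/372)^31 ≤ ((s:ℝ)+1)^31 := pow_le_pow_left₀ (by positivity) hsreal 31
    have e4 : u^30 ≤ (u/372)^31 := by
      rw [div_pow, le_div_iff₀ (by positivity)]
      have : u^30 * (372:ℝ)^31 ≤ u^30 * u := by
        exact mul_le_mul_of_nonneg_left hu (by positivity)
      calc u^30 * (372:ℝ)^31 ≤ u^30 * u := this
        _ = u^31 := by ring
    linarith
  -- (1-t)^M ≤ 1/2
  have hM2 : (1-t)^M ≤ 2⁻¹ := by
    have hMt : (2:ℝ) ≤ (M:ℝ)*t := by
      rw [ht_def]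
      have : 2*u^2 * (u^2)⁻¹ ≤ (M:ℝ) * (u^2)⁻¹ := by
        exact mul_le_mul_of_nonneg_right hMreal (by positivity)
      have h4 : 2*u^2*(u^2)⁻¹ = 2 := by field_simp
      linarith
    have hb : (1:ℝ) + (M:ℝ)*t ≤ (1+t)^M := one_add_mul_le_pow (by linarith) M
    have h2le : (2:ℝ) ≤ (1+t)^M := by linarith
    have hle : 1 - t ≤ (1+t)⁻¹ := by
      rw [inv_eq_one_div, le_div_iff₀ (by linarith)]
      nlinarith
    calc (1-t)^M ≤ ((1+t)⁻¹)^M := pow_le_pow_left₀ h1t0 hle M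
      _ = ((1+t)^M)⁻¹ := by rw [inv_pow]
      _ ≤ 2⁻¹ := by
          apply inv_anti₀ (by norm_num) h2le
  -- assemble
  have hMq : M * q ≤ D := by
    have hmod : M * q + D % M = D := by rw [hq_def]; exact Nat.div_add_mod D M
    omega
  calc (1-t)^D ≤ (1-t)^(M*q) := pow_le_pow_of_le_one h1t0 h1t1 hMq
    _ = ((1-t)^M)^q := by rw [pow_mul]
    _ ≤ (2⁻¹)^q := pow_le_pow_left₀ (by positivity) hM2 q
    _ = ((2:ℝ)^q)⁻¹ := by rw [inv_pow]
    _ ≤ (u^30)⁻¹ := inv_anti₀ (by positivity) h2q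

lemma main_aux {W : Type*} [AddCommGroup W] [DecidableEq W] (A : Finset W)
    (hA : 372^465 ≤ A.card) :
    ∃ a : W, a ∈ A ∧ ∃ A₀ A₁ : Finset W, A₀ ⊆ A ∧ A₁ ⊆ A ∧
      ((A₀.card : ℝ) ≤ 4 * (A.card : ℝ) ^ (-(1 / 15 : ℝ)) * (hatAdd A).card) ∧
      (((A \ A₁).card : ℝ) ≤ 4 * (A.card : ℝ) ^ (-(4 / 5 : ℝ)) * (hatAdd A).card) ∧
      ∀ x ∈ A₁, a + x ∈ hatAdd A₀ := by
  classical
  set k := A.card with hk_def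
  set m := (hatAdd A).card with hm_def
  have hk0 : 0 < k := lt_of_lt_of_le (by positivity) hA
  set u : ℝ := (k:ℝ) ^ ((1:ℝ)/15) with hu_def
  have hkR0 : (0:ℝ) ≤ (k:ℝ) := Nat.cast_nonneg k
  have hu15 : u ^ (15:ℕ) = (k:ℝ) := by
    rw [hu_def, ← Real.rpow_natCast ((k:ℝ) ^ ((1:ℝ)/15)) 15, ← Real.rpow_mul hkR0]
    norm_num
  have hu372 : (372:ℝ)^31 ≤ u := by
    have hcast : ((372:ℝ)^(465:ℕ)) ≤ (k:ℝ) := by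
      exact_mod_cast Nat.cast_le.mpr hA
    have e : ((372:ℝ)^(465:ℕ)) ^ ((1:ℝ)/15) = (372:ℝ)^(31:ℕ) := by
      rw [← Real.rpow_natCast 372 465, ← Real.rpow_mul (by norm_num : (0:ℝ) ≤ 372),
        ← Real.rpow_natCast 372 31]
      norm_num
    calc (372:ℝ)^31 = ((372:ℝ)^(465:ℕ)) ^ ((1:ℝ)/15) := e.symm
      _ ≤ (k:ℝ) ^ ((1:ℝ)/15) := Real.rpow_le_rpow (by positivity) hcast (by norm_num)
  have hu2 : (2:ℝ) ≤ u := le_trans (by norm_num) hu372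
  have hu0 : (0:ℝ) < u := by linarith
  have hune : u ≠ 0 := ne_of_gt hu0
  set p : ℝ := u⁻¹ with hp_def
  have hp0 : 0 ≤ p := by positivity
  have hp1 : p ≤ 1 := by
    rw [hp_def]
    rw [inv_le_comm₀ (by linarith) (by norm_num)]
    linarith
  -- m ≥ k - 1
  obtain ⟨a₀, ha₀⟩ := Finset.card_pos.mp hk0
  have hm1 : k - 1 ≤ m := by
    have hmap : (A.erase a₀).card ≤ m := by
      apply Finset.card_le_card_of_injOn (fun x => a₀ + x)
      · intro x hx
        exact mem_hatAdd' ha₀ (mem_of_mem_erase hx) (Ne.symm (ne_of_mem_erase hx))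
      · intro x _ y _ h
        exact add_left_cancel h
    rwa [card_erase_of_mem ha₀] at hmap
  have hmre : u^15 - 1 ≤ (m:ℝ) := by
    have h1 : ((k - 1 : ℕ):ℝ) ≤ (m:ℝ) := Nat.cast_le.mpr hm1
    rw [Nat.cast_sub hk0] at h1
    rw [← hu15] at h1
    exact_mod_cast h1
  have hu1 : (1:ℝ) ≤ u := by linarith
  have h12one : (1:ℝ) ≤ u^12 := one_le_pow₀ hu1
  have h8 : (8:ℝ) ≤ u^3 := by
    have := pow_le_pow_left₀ (by norm_num : (0:ℝ) ≤ 2) hu2 3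
    norm_num at this
    linarith
  have e1215 : u^15 = u^12 * u^3 := by ring
  have hm12 : u^12 ≤ (m:ℝ) := by nlinarith
  have hm15 : u^15 ≤ 2*(m:ℝ) := by nlinarith
  -- T and counting setup
  set T : ℕ := ⌈u^3⌉₊ with hT_def
  have hu3pos : (0:ℝ) < u^3 := pow_pos hu0 3
  have hT1 : 1 ≤ T := Nat.one_le_iff_ne_zero.mpr (by
    have : 0 < T := Nat.ceil_pos.mpr hu3pos
    omega)
  have hTge : u^3 ≤ (T:ℝ) := Nat.le_ceil _
  have hTle : (T:ℝ) ≤ u^3 + 1 := le_of_lt (Nat.ceil_lt_add_one (le_of_lt hu3pos))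
  set R : W → Finset (W × W) :=
    fun s => (A ×ˢ A).filter fun pr => pr.1 ≠ pr.2 ∧ pr.1 + pr.2 = s with hR_def
  set rA : W → ℕ := fun s => (R s).card with hrA_def
  set L : W → ℕ := fun a => (A.filter fun x => rA (a + x) < T).card with hL_def
  -- choose astar minimizing L
  obtain ⟨astar, hastar, hmin⟩ := Finset.exists_min_image A L ⟨a₀, ha₀⟩
  -- sum bound
  have hsumL : ∑ a ∈ A, L a ≤ m * (T-1) + k := by
    set Q := (A ×ˢ A).filter (fun qr => rA (qr.1 + qr.2) < T) with hQ_def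
    have hQA : ∀ qr ∈ Q, qr.1 ∈ A := fun qr hq => (mem_product.mp (mem_filter.mp hq).1).1
    have step1 : ∑ a ∈ A, L a = Q.card := by
      rw [card_eq_sum_card_fiberwise hQA]
      refine Finset.sum_congr rfl fun a ha => ?_
      rw [hL_def]
      apply Finset.card_bij' (fun x hx => ((a, x) : W × W)) (fun qr hq => qr.2)
      · intro x hx
        rw [mem_filter] at hx
        refine mem_filter.mpr ⟨mem_filter.mpr ⟨mem_product.mpr ⟨ha, hx.1⟩, hx.2⟩, rfl⟩
      · intro qr hq
        rw [mem_filter] at hq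
        obtain ⟨hq1, hq2⟩ := hq
        rw [mem_filter] at hq1
        refine mem_filter.mpr ⟨(mem_product.mp hq1.1).2, ?_⟩
        exact hq2 ▸ hq1.2
      · intro x hx; rfl
      · intro qr hq
        rw [mem_filter] at hq
        exact Prod.ext hq.2.symm rfl
    have diag : (Q.filter fun qr => qr.1 = qr.2).card ≤ k := by
      apply Finset.card_le_card_of_injOn Prod.fst
      · intro qr hq
        exact hQA qr (mem_filter.mp hq).1
      · intro qr hq qr' hq' h
        rw [mem_coe, mem_filter] at hq hq'
        exact Prod.ext h (by rw [← hq.2, ← hq'.2, h])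
    have offd : (Q.filter fun qr => ¬ qr.1 = qr.2).card ≤ m * (T-1) := by
      set Qo := Q.filter fun qr => ¬ qr.1 = qr.2 with hQo_def
      have hmaps : ∀ qr ∈ Qo, qr.1 + qr.2 ∈ hatAdd A := by
        intro qr hq
        rw [hQo_def, mem_filter, hQ_def, mem_filter, mem_product] at hq
        exact mem_hatAdd' hq.1.1.1 hq.1.1.2 hq.2
      rw [card_eq_sum_card_fiberwise hmaps]
      have hbound : ∀ s ∈ hatAdd A, (Qo.filter fun qr => qr.1 + qr.2 = s).card ≤ T - 1 := by
        intro s hs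
        rcases (Qo.filter fun qr => qr.1 + qr.2 = s).eq_empty_or_nonempty with he | hne
        · rw [he]; simp
        · obtain ⟨qr, hqr⟩ := hne
          rw [mem_filter, hQo_def, mem_filter, hQ_def, mem_filter] at hqr
          have hlight : rA s < T := by
            rw [← hqr.2]
            exact hqr.1.1.2
          have hsub2 : (Qo.filter fun qr => qr.1 + qr.2 = s) ⊆ R s := by
            intro pr hpr
            simp only [hQo_def, hQ_def, mem_filter] at hpr
            rw [hR_def, mem_filter]
            exact ⟨hpr.1.1.1, hpr.1.2, hpr.2⟩
          have hcc := Finset.card_le_card hsub2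
          simp only [hrA_def] at hlight
          omega
      calc ∑ s ∈ hatAdd A, (Qo.filter fun qr => qr.1 + qr.2 = s).card
          ≤ ∑ s ∈ hatAdd A, (T-1) := Finset.sum_le_sum hbound
        _ = m * (T-1) := by rw [Finset.sum_const, smul_eq_mul, hm_def]
    have hsplit := Finset.card_filter_add_card_filter_not
      (s := Q) (p := fun qr => qr.1 = qr.2)
    rw [step1]
    omega
  have hLmin : k * L astar ≤ m * (T-1) + k := by
    have := Finset.card_nsmul_le_sum A L (L astar) (fun a ha => hmin a ha)
    rw [smul_eq_mul] at this
    exact le_trans this hsumL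
  -- real bound on L astar
  have hu12 : (0:ℝ) < u^12 := pow_pos hu0 12
  have hLre : (L astar : ℝ) ≤ 2*(m:ℝ)*(u^12)⁻¹ := by
    have hc : (k:ℝ) * (L astar) ≤ (m:ℝ) * ((T:ℝ) - 1) + (k:ℝ) := by
      have h1 : ((k * L astar : ℕ):ℝ) ≤ ((m * (T-1) + k : ℕ):ℝ) := Nat.cast_le.mpr hLmin
      push_cast [Nat.cast_sub hT1] at h1
      push_cast
      linarith
    have hm0 : (0:ℝ) ≤ (m:ℝ) := Nat.cast_nonneg m
    have h3 : (0:ℝ) < u^3 := pow_pos hu0 3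
    have key : u^15 * (L astar : ℝ) ≤ 2*(m:ℝ)*u^3 := by
      have e1 : (m:ℝ) * ((T:ℝ)-1) ≤ (m:ℝ) * u^3 := by nlinarith
      have e2 : (k:ℝ) ≤ (m:ℝ) * u^3 := by
        rw [← hu15]
        have h4 := mul_le_mul_of_nonneg_right hm12 (le_of_lt h3)
        linarith [e1215]
      rw [hu15]
      linarith
    have key2 : (L astar:ℝ) * u^12 ≤ 2*(m:ℝ) := by
      by_contra hcon
      push_neg at hcon
      have h5 := mul_lt_mul_of_pos_left hcon h3
      have e : u^3*((L astar:ℝ)*u^12) = u^15 * (L astar:ℝ) := by ring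
      nlinarith
    rw [← div_eq_mul_inv, le_div_iff₀ hu12]
    exact key2

  -- A₁ and blocks
  set A₁ : Finset W := A.filter (fun x => T ≤ rA (astar + x)) with hA1_def
  have hA1sub : A₁ ⊆ A := filter_subset _ _
  have hAdiff : (A \ A₁).card = L astar := by
    have e : A \ A₁ = A.filter (fun x => ¬ T ≤ rA (astar + x)) := by
      rw [hA1_def, Finset.filter_not]
    rw [e]
    simp only [not_le, hL_def]
  set Blk : W → Finset (Finset W) :=
    fun x => (R (astar + x)).image (fun pr => ({pr.1, pr.2} : Finset W)) with hBlk_def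
  have hRmem : ∀ s : W, ∀ pr ∈ R s, pr.1 ∈ A ∧ pr.2 ∈ A ∧ pr.1 ≠ pr.2 ∧ pr.1 + pr.2 = s := by
    intro s pr hpr
    simp only [hR_def, mem_filter, mem_product] at hpr
    exact ⟨hpr.1.1, hpr.1.2, hpr.2.1, hpr.2.2⟩
  have hbsub : ∀ x : W, ∀ blk ∈ Blk x, blk ⊆ A := by
    intro x blk hblk
    simp only [hBlk_def, mem_image] at hblk
    obtain ⟨pr, hpr, rfl⟩ := hblk
    obtain ⟨h1, h2, _, _⟩ := hRmem _ pr hpr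
    intro y hy
    rcases mem_insert.mp hy with h | h
    · exact h ▸ h1
    · exact (mem_singleton.mp h) ▸ h2
  have hbcard : ∀ x : W, ∀ blk ∈ Blk x, blk.card = 2 := by
    intro x blk hblk
    simp only [hBlk_def, mem_image] at hblk
    obtain ⟨pr, hpr, rfl⟩ := hblk
    exact card_pair (hRmem _ pr hpr).2.2.1
  have hbelem : ∀ x : W, ∀ blk ∈ Blk x, ∀ e ∈ blk, blk = {e, astar + x - e} := by
    intro x blk hblk e he
    simp only [hBlk_def, mem_image] at hblk
    obtain ⟨pr, hpr, rfl⟩ := hblk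
    obtain ⟨_, _, hne2, hsum2⟩ := hRmem _ pr hpr
    rcases mem_insert.mp he with h | h
    · rw [h, ← hsum2, add_sub_cancel_left]
    · rw [mem_singleton] at h
      rw [h, ← hsum2, add_sub_cancel_right]
      exact pair_comm pr.1 pr.2
  have hbdisj : ∀ x : W, ∀ b1 ∈ Blk x, ∀ b2 ∈ Blk x, b1 ≠ b2 → Disjoint b1 b2 := by
    intro x b1 h1 b2 h2 hne
    rw [Finset.disjoint_left]
    intro e he1 he2
    exact hne ((hbelem x b1 h1 e he1).trans (hbelem x b2 h2 e he2).symm)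
  have hbcount : ∀ x : W, rA (astar + x) ≤ 2 * (Blk x).card := by
    intro x
    simp only [hrA_def, hBlk_def]
    apply Finset.card_le_mul_card_image
    intro blk hblk
    have hfib : ((R (astar + x)).filter
        (fun pr => ({pr.1, pr.2} : Finset W) = blk)).card ≤ blk.card := by
      apply Finset.card_le_card_of_injOn Prod.fst
      · intro pr hpr
        rw [mem_coe, mem_filter] at hpr
        rw [← hpr.2]
        exact mem_insert_self _ _
      · intro pr hp pr' hp' heq
        rw [mem_coe, mem_filter] at hp hp'
        have e1 := (hRmem _ pr hp.1).2.2.2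
        have e2 := (hRmem _ pr' hp'.1).2.2.2
        refine Prod.ext heq ?_
        rw [← heq] at e2
        calc pr.2 = pr.1 + pr.2 - pr.1 := by rw [add_sub_cancel_left]
          _ = pr.1 + pr'.2 - pr.1 := by rw [e1, e2]
          _ = pr'.2 := by rw [add_sub_cancel_left]
    rw [mem_image] at hblk
    obtain ⟨pr, hpr, hpreq⟩ := hblk
    have : blk.card = 2 := by
      rw [← hpreq]
      exact card_pair (hRmem _ pr hpr).2.2.1
    omega
  have hDmin : ∀ x ∈ A₁, T/2 ≤ (Blk x).card := by
    intro x hx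
    have hT' : T ≤ rA (astar + x) := (mem_filter.mp hx).2
    have := hbcount x
    omega
  -- probabilistic covering
  set Dm : ℕ := T/2 with hDm_def
  set unc : W → Finset W → ℝ :=
    fun x S => ∏ blk ∈ Blk x, (1 - if blk ⊆ S then (1:ℝ) else 0) with hunc_def
  have hunc_nonneg : ∀ (x : W) (S : Finset W), 0 ≤ unc x S := by
    intro x S
    apply Finset.prod_nonneg
    intro blk _
    by_cases h : blk ⊆ S <;> simp [h]
  set Φ : Finset W → ℝ := fun S => (S.card : ℝ) + (k:ℝ) * ∑ x ∈ A₁, unc x S with hPhi_def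
  have hdecay : (1 - p^2) ^ Dm ≤ (u^30)⁻¹ := by
    have h := key_decay hu372
    rw [hp_def]
    exact h
  have h1p0 : 0 ≤ 1 - p^2 := by nlinarith
  have h1p1 : 1 - p^2 ≤ 1 := by nlinarith
  have hExpunc : ∀ x ∈ A₁, Exp p A (unc x) ≤ (1 - p^2)^Dm := by
    intro x hx
    rw [hunc_def]
    rw [Exp_blocks p (Blk x) A (hbsub x) (hbcard x) (hbdisj x)]
    exact pow_le_pow_of_le_one h1p0 h1p1 (hDmin x hx)
  have e4 : p * (k:ℝ) = u^14 := by
    rw [hp_def, ← hu15, show u^(15:ℕ) = u * u^14 by ring, ← mul_assoc,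
      inv_mul_cancel₀ hune, one_mul]
  have hExpPhi : Exp p A Φ ≤ u^14 + 1 := by
    have e1 : Exp p A Φ
        = Exp p A (fun S => (S.card:ℝ)) + (k:ℝ) * ∑ x ∈ A₁, Exp p A (unc x) := by
      rw [hPhi_def, Exp_add p A (fun S => (S.card:ℝ)) (fun S => (k:ℝ) * ∑ x ∈ A₁, unc x S),
        Exp_mul p A ((k:ℝ)) (fun S => ∑ x ∈ A₁, unc x S), Exp_sum p A A₁ unc]
    rw [e1, Exp_card]
    have e2 : ∑ x ∈ A₁, Exp p A (unc x) ≤ (k:ℝ) * (1-p^2)^Dm := by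
      calc ∑ x ∈ A₁, Exp p A (unc x) ≤ ∑ _x ∈ A₁, (1-p^2)^Dm := Finset.sum_le_sum hExpunc
        _ = (A₁.card : ℝ) * (1-p^2)^Dm := by rw [Finset.sum_const, nsmul_eq_mul]
        _ ≤ (k:ℝ) * (1-p^2)^Dm := by
            apply mul_le_mul_of_nonneg_right _ (pow_nonneg h1p0 _)
            exact_mod_cast Finset.card_le_card hA1sub
    have e3 : (k:ℝ) * ((k:ℝ) * (1-p^2)^Dm) ≤ 1 := by
      rw [← hu15]
      calc u^15 * (u^15 * (1-p^2)^Dm) ≤ u^15*(u^15*(u^30)⁻¹) := by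
            apply mul_le_mul_of_nonneg_left
              (mul_le_mul_of_nonneg_left hdecay (le_of_lt (pow_pos hu0 15)))
              (le_of_lt (pow_pos hu0 15))
        _ = 1 := by
            rw [show u^15*(u^15*(u^30)⁻¹) = (u^15*u^15)*(u^30)⁻¹ by ring,
              show u^15*u^15 = u^30 by ring, mul_inv_cancel₀ (ne_of_gt (pow_pos hu0 30))]
    have e5 : (k:ℝ) * ∑ x ∈ A₁, Exp p A (unc x) ≤ 1 :=
      le_trans (mul_le_mul_of_nonneg_left e2 (Nat.cast_nonneg k)) e3
    linarith [e4]
  -- choose minimizing S₀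
  obtain ⟨S₀, hS₀mem, hS₀min⟩ := Finset.exists_min_image A.powerset Φ ⟨∅, empty_mem_powerset A⟩
  have hS₀A : S₀ ⊆ A := mem_powerset.mp hS₀mem
  have hPhiS₀ : Φ S₀ ≤ u^14 + 1 := by
    have h2 : ∀ S ∈ A.powerset, w p A S * Φ S₀ ≤ w p A S * Φ S :=
      fun S hS => mul_le_mul_of_nonneg_left (hS₀min S hS) (w_nonneg hp0 hp1 A S)
    have h3 : ∑ S ∈ A.powerset, w p A S * Φ S₀ ≤ Exp p A Φ := Finset.sum_le_sum h2
    rw [← Finset.sum_mul, sum_w, one_mul] at h3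
    linarith
  have hsum_nonneg : ∀ S : Finset W, 0 ≤ ∑ x ∈ A₁, unc x S :=
    fun S => Finset.sum_nonneg fun x _ => hunc_nonneg x S
  have hklarge : u^14 + 1 < (k:ℝ) := by
    rw [← hu15]
    have h14 : (2:ℝ)^14 ≤ u^14 := by
      have := pow_le_pow_left₀ (by norm_num : (0:ℝ) ≤ 2) hu2 14
      linarith
    nlinarith
  have hcover : ∀ x ∈ A₁, astar + x ∈ hatAdd S₀ := by
    intro x hx
    by_contra hcon
    have hnone : ∀ blk ∈ Blk x, ¬ blk ⊆ S₀ := by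
      intro blk hblk hsubS
      simp only [hBlk_def, mem_image] at hblk
      obtain ⟨pr, hpr, rfl⟩ := hblk
      obtain ⟨_, _, hne2, hsum2⟩ := hRmem _ pr hpr
      have hmem := mem_hatAdd' (X := S₀) (hsubS (mem_insert_self _ _))
        (hsubS (mem_insert_of_mem (mem_singleton_self _))) hne2
      rw [hsum2] at hmem
      exact hcon hmem
    have huncone : unc x S₀ = 1 := by
      rw [hunc_def]
      apply Finset.prod_eq_one
      intro blk hblk
      simp [hnone blk hblk]
    have hge : (1:ℝ) ≤ ∑ x' ∈ A₁, unc x' S₀ := by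
      have h5 := Finset.single_le_sum (f := fun x' => unc x' S₀)
        (fun x' _ => hunc_nonneg x' S₀) hx
      rw [← huncone]
      exact h5
    have h6 : (k:ℝ) ≤ Φ S₀ := by
      rw [hPhi_def]
      have h7 := mul_le_mul_of_nonneg_left hge (Nat.cast_nonneg (α := ℝ) k)
      have hc0 : (0:ℝ) ≤ (S₀.card:ℝ) := Nat.cast_nonneg _
      simp only []
      linarith
    linarith
  have hS₀card : (S₀.card : ℝ) ≤ u^14 + 1 := by
    have h0 : 0 ≤ (k:ℝ) * ∑ x ∈ A₁, unc x S₀ :=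
      mul_nonneg (Nat.cast_nonneg k) (hsum_nonneg S₀)
    have h1 : (S₀.card:ℝ) ≤ Φ S₀ := by
      rw [hPhi_def]; simp only []; linarith
    linarith
  refine ⟨astar, hastar, S₀, A₁, hS₀A, hA1sub, ?_, ?_, hcover⟩
  · have hrw : (k:ℝ) ^ (-(1/15:ℝ)) = u⁻¹ := by
      rw [Real.rpow_neg hkR0, ← hu_def]
    rw [hrw]
    have hinv0 : (0:ℝ) ≤ u⁻¹ := le_of_lt (inv_pos.mpr hu0)
    have h3 := mul_le_mul_of_nonneg_left hm15 hinv0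
    have h4 : u⁻¹ * u^15 = u^14 := by
      rw [show u^(15:ℕ) = u * u^14 by ring, ← mul_assoc, inv_mul_cancel₀ hune, one_mul]
    have h14 : (1:ℝ) ≤ u^14 := one_le_pow₀ hu1
    have : u^14 + 1 ≤ 4 * u⁻¹ * (m:ℝ) := by nlinarith
    linarith
  · have hrw : (k:ℝ) ^ (-(4/5:ℝ)) = (u^12)⁻¹ := by
      rw [Real.rpow_neg hkR0]
      congr 1
      rw [hu_def, ← Real.rpow_natCast ((k:ℝ) ^ ((1:ℝ)/15)) 12, ← Real.rpow_mul hkR0]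
      norm_num
    rw [hrw, hAdiff]
    have hmi : (0:ℝ) ≤ (m:ℝ)*(u^12)⁻¹ := mul_nonneg (Nat.cast_nonneg m) (le_of_lt (inv_pos.mpr hu12))
    calc (L astar:ℝ) ≤ 2*(m:ℝ)*(u^12)⁻¹ := hLre
      _ ≤ 4*(u^12)⁻¹*(m:ℝ) := by nlinarith

end SG

/-- For `A` a subset of a vector space with `|A| = k` large and `m = |A +̂ A|`, there are
`a* ∈ A` and `A₀, A₁ ⊆ A` with `|A₀| ≤ 4 k^{-1/15} m`, `|A \ A₁| ≤ 4 k^{-4/5} m` and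
`a* + A₁ ⊆ A₀ +̂ A₀`. -/
theorem exists_small_generating_subset :
    ∃ k₀ : ℕ, ∀ (F : Type u) (W : Type v) [Field F] [AddCommGroup W] [Module F W]
      [DecidableEq W] (A : Finset W), k₀ ≤ A.card →
      ∃ a : W, a ∈ A ∧ ∃ A₀ A₁ : Finset W, A₀ ⊆ A ∧ A₁ ⊆ A ∧
        ((A₀.card : ℝ) ≤ 4 * (A.card : ℝ) ^ (-(1 / 15 : ℝ)) * (hatAdd A).card) ∧
        (((A \ A₁).card : ℝ) ≤ 4 * (A.card : ℝ) ^ (-(4 / 5 : ℝ)) * (hatAdd A).card) ∧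
        ∀ x ∈ A₁, a + x ∈ hatAdd A₀ := by
  refine ⟨372^465, ?_⟩
  intro F W _ _ _ _ A hA
  obtain ⟨a, ha, A₀, A₁, h0, h1, h2, h3, h4⟩ := SG.main_aux A hA
  exact ⟨a, ha, A₀, A₁, h0, h1, h2, h3, h4⟩
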